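/- Let e ∈ [0,1] and K ∈ ℕ. The probability that a Binomial(K, e) random variable exceeds K/2, i.e. ∑_{k > K/2} C(K,k) e^k (1-e)^{K-k}, is at most (4e(1-e))^{K/2} when e ≤ 1/2. -/

import Mathlib

open Finset

/-- Chernoff-type bound on the upper binomial tail: for `e ≤ 1/2`,
`∑_{k > K/2} C(K,k) e^k (1-e)^{K-k} ≤ (4 e (1-e))^(K/2)`. -/
theorem stmt_10 (K : ℕ) (e : ℝ) (he0 : 0 ≤ e) (he : e ≤ 1 / 2) :
    (∑ k ∈ (Finset.range (K + 1)).filter (fun k : ℕ => (K : ℝ) / 2 < (k : ℝ)),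
        (K.choose k : ℝ) * e ^ k * (1 - e) ^ (K - k))
      ≤ (4 * e * (1 - e)) ^ ((K : ℝ) / 2) := by
  have h1e : (0:ℝ) < 1 - e := by linarith
  have hee : 0 ≤ e * (1 - e) := mul_nonneg he0 h1e.le
  have key : ∀ k ∈ (Finset.range (K + 1)).filter (fun k : ℕ => (K : ℝ) / 2 < (k : ℝ)),
      (K.choose k : ℝ) * e ^ k * (1 - e) ^ (K - k)
        ≤ (K.choose k : ℝ) * (e * (1 - e)) ^ ((K : ℝ) / 2) := by
    intro k hk
    simp only [mem_filter, mem_range] at hk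
    obtain ⟨hkK, hk2⟩ := hk
    have hkK' : (k : ℝ) ≤ K := by exact_mod_cast Nat.lt_succ_iff.mp hkK
    have hsub : ((K - k : ℕ) : ℝ) = (K : ℝ) - k := by
      rw [Nat.cast_sub (Nat.lt_succ_iff.mp hkK)]
    have hmain : e ^ k * (1 - e) ^ (K - k) ≤ (e * (1 - e)) ^ ((K : ℝ) / 2) := by
      rcases eq_or_lt_of_le he0 with h0 | h0
      · -- e = 0
        have hkpos : 0 < k := by
          rcases Nat.eq_zero_or_pos k with h | h
          · exfalso; subst h; simp at hk2
            have : (0:ℝ) ≤ (K:ℝ)/2 := by positivity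
            linarith
          · exact h
        rw [← h0]
        simp [zero_pow hkpos.ne']
        positivity
      · -- e > 0
        have hcast : e ^ k * (1 - e) ^ (K - k)
            = e ^ ((k : ℝ)) * (1 - e) ^ ((K : ℝ) - k) := by
          rw [← Real.rpow_natCast e k, ← Real.rpow_natCast (1 - e) (K - k), hsub]
        rw [hcast]
        have h1 : e ^ ((k : ℝ)) = e ^ ((K : ℝ) / 2) * e ^ ((k : ℝ) - K / 2) := by
          rw [← Real.rpow_add h0]; ring_nf
        have h2 : (1 - e) ^ ((K : ℝ) - k)
            = (1 - e) ^ ((K : ℝ) / 2) * (1 - e) ^ ((K : ℝ) / 2 - k) := by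
          rw [← Real.rpow_add h1e]; ring_nf
        rw [h1, h2]
        have ht : (0:ℝ) ≤ (k : ℝ) - K / 2 := by linarith
        have hle : e ^ ((k : ℝ) - K / 2) ≤ (1 - e) ^ ((k : ℝ) - K / 2) :=
          Real.rpow_le_rpow he0 (by linarith) ht
        have hprod : e ^ ((k : ℝ) - K / 2) * (1 - e) ^ ((K : ℝ) / 2 - k) ≤ 1 := by
          calc e ^ ((k : ℝ) - K / 2) * (1 - e) ^ ((K : ℝ) / 2 - k)
              ≤ (1 - e) ^ ((k : ℝ) - K / 2) * (1 - e) ^ ((K : ℝ) / 2 - k) := by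
                apply mul_le_mul_of_nonneg_right hle (Real.rpow_nonneg h1e.le _)
            _ = (1 - e) ^ (((k : ℝ) - K / 2) + ((K : ℝ) / 2 - k)) :=
                (Real.rpow_add h1e _ _).symm
            _ = 1 := by norm_num
        have hpos1 : (0:ℝ) ≤ e ^ ((K : ℝ) / 2) := Real.rpow_nonneg he0 _
        have hpos2 : (0:ℝ) ≤ (1 - e) ^ ((K : ℝ) / 2) := Real.rpow_nonneg h1e.le _
        calc e ^ ((K : ℝ) / 2) * e ^ ((k : ℝ) - K / 2)
              * ((1 - e) ^ ((K : ℝ) / 2) * (1 - e) ^ ((K : ℝ) / 2 - k))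
            = (e ^ ((K : ℝ) / 2) * (1 - e) ^ ((K : ℝ) / 2))
              * (e ^ ((k : ℝ) - K / 2) * (1 - e) ^ ((K : ℝ) / 2 - k)) := by ring
          _ ≤ (e ^ ((K : ℝ) / 2) * (1 - e) ^ ((K : ℝ) / 2)) * 1 := by
              apply mul_le_mul_of_nonneg_left hprod (mul_nonneg hpos1 hpos2)
          _ = (e * (1 - e)) ^ ((K : ℝ) / 2) := by
              rw [mul_one, ← Real.mul_rpow he0 h1e.le]
    calc (K.choose k : ℝ) * e ^ k * (1 - e) ^ (K - k)
        = (K.choose k : ℝ) * (e ^ k * (1 - e) ^ (K - k)) := by ring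
      _ ≤ (K.choose k : ℝ) * (e * (1 - e)) ^ ((K : ℝ) / 2) := by
          apply mul_le_mul_of_nonneg_left hmain (by positivity)
  calc (∑ k ∈ (Finset.range (K + 1)).filter (fun k : ℕ => (K : ℝ) / 2 < (k : ℝ)),
        (K.choose k : ℝ) * e ^ k * (1 - e) ^ (K - k))
      ≤ ∑ k ∈ (Finset.range (K + 1)).filter (fun k : ℕ => (K : ℝ) / 2 < (k : ℝ)),
          (K.choose k : ℝ) * (e * (1 - e)) ^ ((K : ℝ) / 2) := Finset.sum_le_sum key
    _ ≤ ∑ k ∈ Finset.range (K + 1), (K.choose k : ℝ) * (e * (1 - e)) ^ ((K : ℝ) / 2) := by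
        apply Finset.sum_le_sum_of_subset_of_nonneg (Finset.filter_subset _ _)
        intros; positivity
    _ = (2 : ℝ) ^ K * (e * (1 - e)) ^ ((K : ℝ) / 2) := by
        rw [← Finset.sum_mul]
        congr 1
        rw [← Nat.cast_sum]
        rw [Nat.sum_range_choose]
        push_cast; ring
    _ = (4 * e * (1 - e)) ^ ((K : ℝ) / 2) := by
        rw [mul_assoc, Real.mul_rpow (by norm_num) hee]
        congr 1
        rw [show (4:ℝ) = (2:ℝ) ^ (2:ℝ) by norm_num, ← Real.rpow_natCast (2:ℝ) K,
          ← Real.rpow_mul (by norm_num)]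
        ring_nf
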